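/- Let g be C^1, even, with g' strictly increasing, odd, and unbounded. Define μ(V₁,V₂) = P₃ − P₂ for 0 < V₁ ≤ V₂. Then for each fixed V₂, μ is strictly increasing in V₁ on (0,V₂], and for each fixed V₁, μ is strictly decreasing in V₂ on [V₁,∞). -/

import Mathlib

set_option maxHeartbeats 1000000

open Set

private lemma slope_bounds {g : ℝ → ℝ} (hg : ContDiff ℝ 1 g) (hg' : StrictMono (deriv g))
    {x y : ℝ} (h : x < y) :
    g y - g x < (y - x) * deriv g y ∧ (y - x) * deriv g x < g y - g x := by
  obtain ⟨c, hc, hd⟩ := exists_deriv_eq_slope g h (hg.continuous.continuousOn)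
    ((hg.differentiable one_ne_zero).differentiableOn)
  have h1 : deriv g c < deriv g y := hg' hc.2
  have h2 : deriv g x < deriv g c := hg' hc.1
  have hxy : 0 < y - x := by linarith
  constructor
  · have := (div_lt_iff₀ hxy).mp (hd ▸ h1)
    nlinarith
  · have := (lt_div_iff₀ hxy).mp (hd ▸ h2)
    nlinarith

private lemma slope_bounds_le {g : ℝ → ℝ} (hg : ContDiff ℝ 1 g) (hg' : StrictMono (deriv g))
    {x y : ℝ} (h : x ≤ y) :
    g y - g x ≤ (y - x) * deriv g y ∧ (y - x) * deriv g x ≤ g y - g x := by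
  rcases h.eq_or_lt with rfl | h
  · simp
  · exact ⟨(slope_bounds hg hg' h).1.le, (slope_bounds hg hg' h).2.le⟩

private lemma sum_min {g : ℝ → ℝ} (hg : ContDiff ℝ 1 g) (hg' : StrictMono (deriv g))
    (k₁ k₂ v t : ℝ)
    (heq : deriv g v + deriv g (v + k₁) + deriv g (v + k₁ + k₂) = 0) :
    g v + g (v + k₁) + g (v + k₁ + k₂) ≤ g t + g (t + k₁) + g (t + k₁ + k₂) := by
  have heq' : (v - t) * (deriv g v + deriv g (v + k₁) + deriv g (v + k₁ + k₂)) = 0 := by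
    rw [heq]; ring
  rcases le_total t v with h | h
  · have a1 := (slope_bounds_le hg hg' h).1
    have a2 := (slope_bounds_le hg hg' (by linarith : t + k₁ ≤ v + k₁)).1
    have a3 := (slope_bounds_le hg hg' (by linarith : t + k₁ + k₂ ≤ v + k₁ + k₂)).1
    nlinarith [heq']
  · have a1 := (slope_bounds_le hg hg' h).2
    have a2 := (slope_bounds_le hg hg' (by linarith : v + k₁ ≤ t + k₁)).2
    have a3 := (slope_bounds_le hg hg' (by linarith : v + k₁ + k₂ ≤ t + k₁ + k₂)).2
    nlinarith [heq']

private lemma Vt_lb {g : ℝ → ℝ} (hg' : StrictMono (deriv g))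
    (hodd : ∀ v, deriv g (-v) = -deriv g v) {V₁ V₂ v : ℝ} (h1 : 0 < V₁) (h12 : V₁ ≤ V₂)
    (heq : deriv g v + deriv g (v + V₁) + deriv g (v + V₁ + V₂) = 0) :
    -((V₁ + V₂) / 2) ≤ v := by
  have hD0 : deriv g 0 = 0 := by have := hodd 0; simp at this; linarith
  by_contra h
  push_neg at h
  have h3 : deriv g (v + V₁ + V₂) < deriv g (-v) := hg' (by linarith)
  have h2 : deriv g (v + V₁) ≤ deriv g 0 := hg'.le_iff_le.mpr (by linarith)
  rw [hodd v] at h3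
  linarith

private lemma Vt_lt {g : ℝ → ℝ} (hg' : StrictMono (deriv g))
    (hodd : ∀ v, deriv g (-v) = -deriv g v) {V₁ V₂ v : ℝ} (h1 : 0 < V₁) (h12 : V₁ < V₂)
    (heq : deriv g v + deriv g (v + V₁) + deriv g (v + V₁ + V₂) = 0) :
    -((V₁ + V₂) / 2) < v := by
  have hD0 : deriv g 0 = 0 := by have := hodd 0; simp at this; linarith
  by_contra h
  push_neg at h
  have h3 : deriv g (v + V₁ + V₂) ≤ deriv g (-v) := hg'.le_iff_le.mpr (by linarith)
  have h2 : deriv g (v + V₁) < deriv g 0 := hg' (by linarith)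
  rw [hodd v] at h3
  linarith

private lemma Vt_ub {g : ℝ → ℝ} (hg' : StrictMono (deriv g))
    (hodd : ∀ v, deriv g (-v) = -deriv g v) {V₁ V₂ v : ℝ} (h1 : 0 < V₁) (h12 : V₁ ≤ V₂)
    (heq : deriv g v + deriv g (v + V₁) + deriv g (v + V₁ + V₂) = 0) :
    v ≤ -V₁ := by
  have hD0 : deriv g 0 = 0 := by have := hodd 0; simp at this; linarith
  have hlb := Vt_lb hg' hodd h1 h12 heq
  by_contra h
  push_neg at h
  have h2 : deriv g 0 < deriv g (v + V₁) := hg' (by linarith)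
  have h3 : deriv g (-v) ≤ deriv g (v + V₁ + V₂) := hg'.le_iff_le.mpr (by linarith)
  rw [hodd v] at h3
  linarith

private lemma chainMono {f : ℝ → ℝ} {p q : ℝ} (hpq : p < q)
    (hloc : ∀ c ∈ Icc p q, ∃ δ > 0, ∀ x ∈ Icc p q, ∀ y ∈ Icc p q,
      |x - c| < δ → |y - c| < δ → x < y → f x < f y) : f p < f q := by
  set T : Set ℝ := {x | x ∈ Icc p q ∧ ∀ y, p < y → y ≤ x → f p < f y} with hT
  have hpT : p ∈ T := ⟨⟨le_refl p, hpq.le⟩, fun y hy hy' => absurd (lt_of_lt_of_le hy hy') (lt_irrefl p)⟩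
  have hTne : T.Nonempty := ⟨p, hpT⟩
  have hTbdd : BddAbove T := ⟨q, fun t ht => ht.1.2⟩
  set c := sSup T with hc
  have hcp : p ≤ c := le_csSup hTbdd hpT
  have hcq : c ≤ q := csSup_le hTne (fun t ht => ht.1.2)
  obtain ⟨δ, hδ, hstep⟩ := hloc c ⟨hcp, hcq⟩
  obtain ⟨t, htT, htc⟩ := exists_lt_of_lt_csSup hTne (by linarith : c - δ < c)
  have htc' : t ≤ c := le_csSup hTbdd htT
  have key : ∀ y, p < y → y ≤ q → y ≤ c + δ / 2 → f p < f y := by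
    intro y hy1 hy2 hy3
    rcases le_or_gt y t with h | h
    · exact htT.2 y hy1 h
    · have hty : f t < f y := hstep t htT.1 y ⟨hy1.le, hy2⟩
        (abs_lt.mpr ⟨by linarith, by linarith⟩) (abs_lt.mpr ⟨by linarith, by linarith⟩) h
      rcases htT.1.1.eq_or_lt with rfl | hpt
      · exact hty
      · exact (htT.2 t hpt le_rfl).trans hty
  have hmem : min q (c + δ / 2) ∈ T := by
    refine ⟨⟨le_min hpq.le (by linarith), min_le_left _ _⟩, fun y hy1 hy2 => ?_⟩
    exact key y hy1 (hy2.trans (min_le_left _ _)) (hy2.trans (min_le_right _ _))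
  have hmc : min q (c + δ / 2) ≤ c := le_csSup hTbdd hmem
  have hqc : q ≤ c + δ / 2 := by
    by_contra h
    push_neg at h
    rw [min_eq_right h.le] at hmc
    linarith
  exact key q hpq le_rfl hqc
/-- Monotonicity of the perimeter difference `μ = P₃ - P₂`: with `g` the density in
volume coordinates (`C¹`, even, `g'` strictly increasing, odd, unbounded) and
`Vt V₁ V₂` the equilibrium point of the double interval, `μ` is strictly increasing in
`V₁` for fixed `V₂` and strictly decreasing in `V₂` for fixed `V₁`. -/
theorem mu_monotone (g : ℝ → ℝ) (hg : ContDiff ℝ 1 g)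
    (hg_even : ∀ v, g (-v) = g v) (hg' : StrictMono (deriv g))
    (hg'_odd : ∀ v, deriv g (-v) = -deriv g v)
    (hg'_unbdd : ∀ c : ℝ, ∃ x, c < deriv g x)
    (Vt : ℝ → ℝ → ℝ)
    (hVt : ∀ V₁ V₂, 0 < V₁ → V₁ ≤ V₂ →
      deriv g (Vt V₁ V₂) + deriv g (Vt V₁ V₂ + V₁) + deriv g (Vt V₁ V₂ + V₁ + V₂) = 0)
    (μ : ℝ → ℝ → ℝ)
    (hμ : ∀ V₁ V₂, μ V₁ V₂ = 2 * (g (V₁ / 2) + g ((V₁ + V₂) / 2)) -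
      (g (Vt V₁ V₂) + g (Vt V₁ V₂ + V₁) + g (Vt V₁ V₂ + V₁ + V₂))) :
    (∀ V₂ > 0, StrictMonoOn (fun V₁ => μ V₁ V₂) (Set.Ioc 0 V₂)) ∧
      (∀ V₁ > 0, StrictAntiOn (fun V₂ => μ V₁ V₂) (Set.Ici V₁)) := by
  have hD0 : deriv g 0 = 0 := by have := hg'_odd 0; simp at this; linarith
  have hDcont : Continuous (deriv g) := hg.continuous_deriv le_rfl
  constructor
  · -- Part 1 : strictly increasing in V₁
    intro V₂ hV₂ a ha b hb hab
    refine chainMono (f := fun V₁ => μ V₁ V₂) hab ?_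
    intro c hc
    have hc0 : 0 < c := lt_of_lt_of_le ha.1 hc.1
    have hUC := (isCompact_Icc (a := -V₂) (b := 2*V₂)).uniformContinuousOn_of_continuous
      hDcont.continuousOn
    have hεpos : 0 < deriv g (c/4) := by
      have := hg' (show (0:ℝ) < c/4 by linarith); rw [hD0] at this; exact this
    obtain ⟨δ₀, hδ₀, hK⟩ := Metric.uniformContinuousOn_iff.mp hUC (deriv g (c/4) / 2)
      (by linarith)
    refine ⟨min δ₀ c / 2, by positivity, ?_⟩
    intro x hx y hy hxc hyc hxy
    have hxc' := abs_lt.mp hxc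
    have hyc' := abs_lt.mp hyc
    have hmin1 := min_le_left δ₀ c
    have hmin2 := min_le_right δ₀ c
    have hx0 : 0 < x := lt_of_lt_of_le ha.1 hx.1
    have hxV : x ≤ V₂ := le_trans hx.2 hb.2
    have hy0 : 0 < y := lt_of_lt_of_le ha.1 hy.1
    have hyV : y ≤ V₂ := le_trans hy.2 hb.2
    have eqx := hVt x V₂ hx0 hxV
    have eqy := hVt y V₂ hy0 hyV
    have hvl : -((x+V₂)/2) ≤ Vt x V₂ := Vt_lb hg' hg'_odd hx0 hxV eqx
    have hvu : Vt x V₂ ≤ -x := Vt_ub hg' hg'_odd hx0 hxV eqx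
    have e1 : g (Vt y V₂) + g (Vt y V₂ + y) + g (Vt y V₂ + y + V₂) ≤
        g (Vt x V₂) + g (Vt x V₂ + y) + g (Vt x V₂ + y + V₂) :=
      sum_min hg hg' y V₂ (Vt y V₂) (Vt x V₂) eqy
    have b1 := (slope_bounds_le hg hg' (show x/2 ≤ y/2 by linarith)).2
    have b2 := (slope_bounds_le hg hg' (show (x+V₂)/2 ≤ (y+V₂)/2 by linarith)).2
    have b3 := (slope_bounds hg hg' (show Vt x V₂ + x < Vt x V₂ + y by linarith)).1
    have b4 := (slope_bounds hg hg'
      (show Vt x V₂ + x + V₂ < Vt x V₂ + y + V₂ by linarith)).1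
    have m1 : Vt x V₂ + x ∈ Set.Icc (-V₂) (2*V₂) := ⟨by linarith, by linarith⟩
    have m2 : Vt x V₂ + y ∈ Set.Icc (-V₂) (2*V₂) := ⟨by linarith, by linarith⟩
    have m3 : Vt x V₂ + x + V₂ ∈ Set.Icc (-V₂) (2*V₂) := ⟨by linarith, by linarith⟩
    have m4 : Vt x V₂ + y + V₂ ∈ Set.Icc (-V₂) (2*V₂) := ⟨by linarith, by linarith⟩
    have hdist : y - x < δ₀ := by linarith
    have o1 : deriv g (Vt x V₂ + y) ≤ deriv g (Vt x V₂ + x) + deriv g (c/4) / 2 := by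
      have hd := hK _ m2 _ m1 (by
        rw [Real.dist_eq, show Vt x V₂ + y - (Vt x V₂ + x) = y - x by ring,
          abs_of_pos (by linarith : (0:ℝ) < y - x)]
        exact hdist)
      rw [Real.dist_eq] at hd
      have := abs_lt.mp hd
      linarith
    have o2 : deriv g (Vt x V₂ + y + V₂) ≤ deriv g (Vt x V₂ + x + V₂) + deriv g (c/4) / 2 := by
      have hd := hK _ m4 _ m3 (by
        rw [Real.dist_eq, show Vt x V₂ + y + V₂ - (Vt x V₂ + x + V₂) = y - x by ring,
          abs_of_pos (by linarith : (0:ℝ) < y - x)]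
        exact hdist)
      rw [Real.dist_eq] at hd
      have := abs_lt.mp hd
      linarith
    have k1' : -(deriv g ((x+V₂)/2)) ≤ deriv g (Vt x V₂) := by
      have h := hg'.le_iff_le.mpr hvl
      rw [hg'_odd ((x+V₂)/2)] at h
      linarith
    have hεx : deriv g (c/4) ≤ deriv g (x/2) := hg'.le_iff_le.mpr (by linarith)
    have hd' : (0:ℝ) < y - x := by linarith
    have o1' := mul_le_mul_of_nonneg_left o1 hd'.le
    have o2' := mul_le_mul_of_nonneg_left o2 hd'.le
    have k1'' := mul_le_mul_of_nonneg_left k1' hd'.le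
    have hεx' := mul_le_mul_of_nonneg_left hεx hd'.le
    have eqx' : (y - x) * (deriv g (Vt x V₂) + deriv g (Vt x V₂ + x) +
        deriv g (Vt x V₂ + x + V₂)) = 0 := by rw [eqx]; ring
    show μ x V₂ < μ y V₂
    rw [hμ x V₂, hμ y V₂]
    linarith [e1, b1, b2, b3, b4, o1', o2', k1'', hεx', eqx']
  · -- Part 2 : strictly decreasing in V₂
    intro a ha p hp q hq hpq
    rcases (Set.mem_Ici.mp hp).eq_or_lt with rfl | hap
    · -- endpoint case p = a
      have eqq := hVt a q ha hpq.le
      have hvl := Vt_lb hg' hg'_odd ha hpq.le eqq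
      have hvu := Vt_ub hg' hg'_odd ha hpq.le eqq
      have eqa := hVt a a ha le_rfl
      have hda : Vt a a = -a := le_antisymm (Vt_ub hg' hg'_odd ha le_rfl eqa)
        (by have := Vt_lb hg' hg'_odd ha le_rfl eqa; linarith)
      show μ a q < μ a a
      rw [hμ a q, hμ a a, hda, show -a + a + a = a by ring, show -a + a = (0:ℝ) by ring,
        show (a+a)/2 = a by ring]
      have hea : g (-a) = g a := hg_even a
      have he_v : g (-Vt a q) = g (Vt a q) := hg_even _
      have he_va : g (-(Vt a q + a)) = g (Vt a q + a) := hg_even _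
      have B1b := (slope_bounds_le hg hg' (show -Vt a q ≤ (a+q)/2 by linarith)).1
      rcases (show 0 ≤ Vt a q + (a+q)/2 by linarith).eq_or_lt with hs0 | hspos
      · have B2s := (slope_bounds hg hg' (show (0:ℝ) < -(Vt a q + a) by linarith)).2
        rw [hD0, mul_zero] at B2s
        have B1a := (slope_bounds_le hg hg' (show (a+q)/2 ≤ Vt a q + a + q by linarith)).2
        linarith [B1b, B1a, B2s, hea, he_v, he_va]
      · have B2' := (slope_bounds_le hg hg' (show (0:ℝ) ≤ -(Vt a q + a) by linarith)).2
        rw [hD0, mul_zero] at B2'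
        have B1a := (slope_bounds hg hg' (show (a+q)/2 < Vt a q + a + q by linarith)).2
        linarith [B1b, B1a, B2', hea, he_v, he_va]
    · -- p > a : chaining
      have H := chainMono (f := fun t => -(μ a t)) hpq ?_
      · simpa using H
      intro c hc
      have hac : a < c := lt_of_lt_of_le hap hc.1
      have eqc := hVt a c ha (by linarith)
      have hscpos : 0 < Vt a c + (a + c)/2 := by
        have := Vt_lt hg' hg'_odd ha hac eqc; linarith
      obtain ⟨σ, hσ⟩ : ∃ σ : ℝ, σ = (Vt a c + (a + c)/2) / 2 := ⟨_, rfl⟩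
      have hσpos : 0 < σ := by rw [hσ]; linarith
      obtain ⟨Φ, hΦ⟩ : ∃ Φ : ℝ → ℝ, Φ = fun x => deriv g (σ - (a+x)/2) +
        deriv g (σ + (a-x)/2) + deriv g (σ + (a+x)/2) := ⟨_, rfl⟩
      have hΦc : Φ c < 0 := by
        have h1 : deriv g (σ - (a+c)/2) < deriv g (Vt a c) := hg' (by rw [hσ]; linarith)
        have h2 : deriv g (σ + (a-c)/2) < deriv g (Vt a c + a) := hg' (by rw [hσ]; linarith)
        have h3 : deriv g (σ + (a+c)/2) < deriv g (Vt a c + a + c) := hg' (by rw [hσ]; linarith)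
        have hrfl : Φ c = deriv g (σ - (a+c)/2) + deriv g (σ + (a-c)/2) +
          deriv g (σ + (a+c)/2) := by rw [hΦ]
        linarith [eqc]
      have hΦcont : Continuous Φ := by
        rw [hΦ]
        exact ((hDcont.comp (by continuity)).add (hDcont.comp (by continuity))).add
          (hDcont.comp (by continuity))
      obtain ⟨δ₁, hδ₁, hball⟩ : ∃ δ₁ > 0, ∀ x, |x - c| < δ₁ → Φ x < 0 := by
        have hopen : IsOpen {x | Φ x < 0} := isOpen_lt hΦcont continuous_const
        obtain ⟨δ₁, hδ₁, hsub⟩ := Metric.isOpen_iff.mp hopen c hΦc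
        exact ⟨δ₁, hδ₁, fun x hx => hsub (by rwa [Metric.mem_ball, Real.dist_eq])⟩
      refine ⟨min δ₁ (min σ (c - a)) / 2, by
        have h0 : 0 < min δ₁ (min σ (c - a)) := lt_min hδ₁ (lt_min hσpos (by linarith))
        linarith, ?_⟩
      intro x hx y hy hxc hyc hxy
      have hxc' := abs_lt.mp hxc
      have hyc' := abs_lt.mp hyc
      have hmin1 : min δ₁ (min σ (c - a)) ≤ δ₁ := min_le_left _ _
      have hmin2 : min δ₁ (min σ (c - a)) ≤ σ :=
        le_trans (min_le_right _ _) (min_le_left _ _)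
      have hmin3 : min δ₁ (min σ (c - a)) ≤ c - a :=
        le_trans (min_le_right _ _) (min_le_right _ _)
      have hxa : a < x := by linarith
      have hya : a < y := by linarith
      have hΦy : Φ y < 0 := hball y (by rw [abs_lt]; constructor <;> linarith)
      have eqy := hVt a y ha hya.le
      have hsy : σ < Vt a y + (a + y)/2 := by
        by_contra hcon
        push_neg at hcon
        have h1 : deriv g (Vt a y) ≤ deriv g (σ - (a+y)/2) := hg'.le_iff_le.mpr (by linarith)
        have h2 : deriv g (Vt a y + a) ≤ deriv g (σ + (a-y)/2) :=
          hg'.le_iff_le.mpr (by linarith)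
        have h3 : deriv g (Vt a y + a + y) ≤ deriv g (σ + (a+y)/2) :=
          hg'.le_iff_le.mpr (by linarith)
        have hrfl : Φ y = deriv g (σ - (a+y)/2) + deriv g (σ + (a-y)/2) +
          deriv g (σ + (a+y)/2) := by rw [hΦ]
        linarith [eqy]
      have eqx := hVt a x ha hxa.le
      have m1 : g (Vt a x) + g (Vt a x + a) + g (Vt a x + a + x) ≤
          g (Vt a y) + g (Vt a y + a) + g (Vt a y + a + x) :=
        sum_min hg hg' a x (Vt a x) (Vt a y) eqx
      have hvQ : (a + y)/2 ≤ Vt a y + a + x := by linarith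
      have s1 := (slope_bounds hg hg' (show (a+x)/2 < (a+y)/2 by linarith)).1
      have s2 := (slope_bounds_le hg hg'
        (show Vt a y + a + x ≤ Vt a y + a + y by linarith)).2
      have s3 : (y - x) * deriv g ((a+y)/2) ≤ (y - x) * deriv g (Vt a y + a + x) :=
        mul_le_mul_of_nonneg_left (hg'.le_iff_le.mpr hvQ) (by linarith)
      show -(μ a x) < -(μ a y)
      rw [hμ a x, hμ a y]
      linarith [m1, s1, s2, s3]
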